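/- arXiv:1704.08867 — 4 statements merged into one kernel-verified Lean document; each statement's English description precedes it below -/
import Mathlib

section
/- For all positive integers p, q, r that are pairwise distinct with q < r, the integral over (0, π) of sin²(px)·sin(qx)·sin(rx) dx equals π/8 if r + q = 2p, equals -π/8 if r - q = 2p, and equals 0 otherwise. -/
open Real intervalIntegral

lemma integral_cos_int_mul (k : ℤ) :
    ∫ x in (0:ℝ)..Real.pi, Real.cos ((k : ℝ) * x) = if k = 0 then Real.pi else 0 := by
  rcases eq_or_ne k 0 with h | h
  · simp [h, Real.pi_pos.le]
  · have hk : (k : ℝ) ≠ 0 := Int.cast_ne_zero.mpr h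
    rw [if_neg h, intervalIntegral.integral_comp_mul_left Real.cos hk]
    simp [integral_cos, Real.sin_int_mul_pi]

lemma trig_ident (A B C : ℝ) :
    Real.sin A ^ 2 * Real.sin B * Real.sin C =
      1/4 * Real.cos (C - B) - 1/4 * Real.cos (C + B)
      - 1/8 * Real.cos (2*A + C - B) - 1/8 * Real.cos (2*A - C + B)
      + 1/8 * Real.cos (2*A + C + B) + 1/8 * Real.cos (2*A - C - B) := by
  simp only [Real.sin_sq, Real.cos_add, Real.cos_sub, Real.sin_add, Real.sin_sub,
    Real.cos_two_mul, Real.sin_two_mul]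
  ring

theorem sin_sq_sin_sin_integral (p q r : ℕ) (hp : 0 < p) (hq : 0 < q) (hr : 0 < r)
    (hpq : p ≠ q) (hpr : p ≠ r) (hqr : q < r) :
    ∫ x in (0:ℝ)..Real.pi,
      Real.sin ((p : ℝ) * x) ^ 2 * Real.sin ((q : ℝ) * x) * Real.sin ((r : ℝ) * x) =
      if r + q = 2 * p then Real.pi / 8
      else if r - q = 2 * p then -Real.pi / 8
      else 0 := by
  set k1 : ℤ := (r : ℤ) - q with hk1
  set k2 : ℤ := (r : ℤ) + q with hk2
  set k3 : ℤ := 2*(p:ℤ) + r - q with hk3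
  set k4 : ℤ := 2*(p:ℤ) - r + q with hk4
  set k5 : ℤ := 2*(p:ℤ) + r + q with hk5
  set k6 : ℤ := 2*(p:ℤ) - r - q with hk6
  have hcong : Set.EqOn
      (fun x => Real.sin ((p : ℝ) * x) ^ 2 * Real.sin ((q : ℝ) * x) * Real.sin ((r : ℝ) * x))
      (fun x => 1/4 * Real.cos ((k1:ℝ) * x) - 1/4 * Real.cos ((k2:ℝ) * x)
        - 1/8 * Real.cos ((k3:ℝ) * x) - 1/8 * Real.cos ((k4:ℝ) * x)
        + 1/8 * Real.cos ((k5:ℝ) * x) + 1/8 * Real.cos ((k6:ℝ) * x))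
      (Set.uIcc 0 Real.pi) := by
    intro x _
    simp only
    rw [trig_ident ((p:ℝ)*x) ((q:ℝ)*x) ((r:ℝ)*x), hk1, hk2, hk3, hk4, hk5, hk6]
    push_cast
    ring_nf
  rw [intervalIntegral.integral_congr hcong]
  have hint : ∀ (k : ℤ) (c : ℝ), IntervalIntegrable (fun x => c * Real.cos ((k:ℝ) * x))
      MeasureTheory.volume 0 Real.pi := by
    intro k c
    exact (Continuous.mul continuous_const (Real.continuous_cos.comp
      (continuous_const.mul continuous_id))).intervalIntegrable _ _
  rw [intervalIntegral.integral_add (((((hint k1 (1/4)).sub (hint k2 (1/4))).sub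
        (hint k3 (1/8))).sub (hint k4 (1/8))).add (hint k5 (1/8))) (hint k6 (1/8)),
      intervalIntegral.integral_add ((((hint k1 (1/4)).sub (hint k2 (1/4))).sub
        (hint k3 (1/8))).sub (hint k4 (1/8))) (hint k5 (1/8)),
      intervalIntegral.integral_sub (((hint k1 (1/4)).sub (hint k2 (1/4))).sub
        (hint k3 (1/8))) (hint k4 (1/8)),
      intervalIntegral.integral_sub ((hint k1 (1/4)).sub (hint k2 (1/4))) (hint k3 (1/8)),
      intervalIntegral.integral_sub (hint k1 (1/4)) (hint k2 (1/4))]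
  simp only [intervalIntegral.integral_const_mul]
  rw [integral_cos_int_mul k1, integral_cos_int_mul k2, integral_cos_int_mul k3,
      integral_cos_int_mul k4, integral_cos_int_mul k5, integral_cos_int_mul k6]
  have h1 : k1 ≠ 0 := by omega
  have h2 : k2 ≠ 0 := by omega
  have h3 : k3 ≠ 0 := by omega
  have h5 : k5 ≠ 0 := by omega
  rw [if_neg h1, if_neg h2, if_neg h3, if_neg h5]
  by_cases hA : r + q = 2 * p
  · have h6 : k6 = 0 := by omega
    have h4 : k4 ≠ 0 := by omega
    rw [if_pos hA, if_neg h4, if_pos h6]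
    ring
  · rw [if_neg hA]
    by_cases hB : r - q = 2 * p
    · have h4 : k4 = 0 := by omega
      have h6 : k6 ≠ 0 := by omega
      rw [if_pos hB, if_pos h4, if_neg h6]
      ring
    · have h4 : k4 ≠ 0 := by omega
      have h6 : k6 ≠ 0 := by omega
      rw [if_neg hB, if_neg h4, if_neg h6]
      ring
end

section
/- For all positive integers p, q, r, s that are pairwise distinct with p < q and r < s, the integral over (0, π) of sin(px)·sin(qx)·sin(rx)·sin(sx) dx equals π/8 if q + p = s + r or q − p = s − r, equals −π/8 if q + p = s − r or q − p = s + r, and equals 0 otherwise. -/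
open Real intervalIntegral

lemma int_cos_int (k : ℝ) (hk : k ≠ 0) (hkz : ∃ n : ℤ, k = n) :
    ∫ x in (0:ℝ)..Real.pi, Real.cos (k * x) = 0 := by
  rw [intervalIntegral.integral_comp_mul_left (fun x => Real.cos x) hk]
  obtain ⟨n, rfl⟩ := hkz
  simp [Real.sin_int_mul_pi]

lemma int_cos_nat (m n : ℕ) (hm : 0 < m) (hn : 0 < n) :
    ∫ x in (0:ℝ)..Real.pi, Real.cos ((m:ℝ) * x) * Real.cos ((n:ℝ) * x) =
      if m = n then Real.pi / 2 else 0 := by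
  have key : ∀ x : ℝ, Real.cos ((m:ℝ) * x) * Real.cos ((n:ℝ) * x) =
      (Real.cos (((m:ℝ) - n) * x) + Real.cos (((m:ℝ) + n) * x)) / 2 := by
    intro x
    have := Real.two_mul_cos_mul_cos ((m:ℝ) * x) ((n:ℝ) * x)
    rw [← sub_mul, ← add_mul] at this
    linarith
  simp_rw [key]
  rw [intervalIntegral.integral_div]
  have hi1 : IntervalIntegrable (fun x => Real.cos (((m:ℝ) - n) * x)) MeasureTheory.volume 0 Real.pi :=
    (Real.continuous_cos.comp (continuous_const.mul continuous_id)).intervalIntegrable _ _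
  have hi2 : IntervalIntegrable (fun x => Real.cos (((m:ℝ) + n) * x)) MeasureTheory.volume 0 Real.pi :=
    (Real.continuous_cos.comp (continuous_const.mul continuous_id)).intervalIntegrable _ _
  rw [intervalIntegral.integral_add hi1 hi2]
  have h2 : ∫ x in (0:ℝ)..Real.pi, Real.cos (((m:ℝ) + n) * x) = 0 := by
    apply int_cos_int
    · positivity
    · exact ⟨(m : ℤ) + n, by push_cast; ring⟩
  rw [h2]
  by_cases hmn : m = n
  · subst hmn
    simp
  · have h1 : ∫ x in (0:ℝ)..Real.pi, Real.cos (((m:ℝ) - n) * x) = 0 := by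
      apply int_cos_int
      · intro h
        apply hmn
        have : (m:ℝ) = n := by linarith
        exact_mod_cast this
      · exact ⟨(m : ℤ) - n, by push_cast; ring⟩
    rw [h1, if_neg hmn]
    norm_num

theorem sin_four_product_integral (p q r s : ℕ) (hp : 0 < p) (hr : 0 < r)
    (hpq : p < q) (hrs : r < s)
    (h1 : p ≠ r) (h2 : p ≠ s) (h3 : q ≠ r) (h4 : q ≠ s) :
    ∫ x in (0:ℝ)..Real.pi,
      Real.sin ((p : ℝ) * x) * Real.sin ((q : ℝ) * x) *
        Real.sin ((r : ℝ) * x) * Real.sin ((s : ℝ) * x) =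
      if q + p = s + r ∨ q - p = s - r then Real.pi / 8
      else if q + p = s - r ∨ q - p = s + r then -Real.pi / 8
      else 0 := by
  have hpq' : p ≤ q := hpq.le
  have hrs' : r ≤ s := hrs.le
  have castA : ((q - p : ℕ) : ℝ) = (q:ℝ) - p := by push_cast [hpq']; ring
  have castC : ((s - r : ℕ) : ℝ) = (s:ℝ) - r := by push_cast [hrs']; ring
  have key : ∀ x : ℝ,
      Real.sin ((p : ℝ) * x) * Real.sin ((q : ℝ) * x) *
        Real.sin ((r : ℝ) * x) * Real.sin ((s : ℝ) * x) =
      (Real.cos (((q - p : ℕ) : ℝ) * x) * Real.cos (((s - r : ℕ) : ℝ) * x)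
       - Real.cos (((q - p : ℕ) : ℝ) * x) * Real.cos (((s + r : ℕ) : ℝ) * x)
       - Real.cos (((q + p : ℕ) : ℝ) * x) * Real.cos (((s - r : ℕ) : ℝ) * x)
       + Real.cos (((q + p : ℕ) : ℝ) * x) * Real.cos (((s + r : ℕ) : ℝ) * x)) / 4 := by
    intro x
    have e1 := Real.two_mul_sin_mul_sin ((p:ℝ) * x) ((q:ℝ) * x)
    have e2 := Real.two_mul_sin_mul_sin ((r:ℝ) * x) ((s:ℝ) * x)
    rw [← sub_mul, ← add_mul] at e1 e2
    have c1 : Real.cos (((p:ℝ) - q) * x) = Real.cos (((q - p : ℕ):ℝ) * x) := by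
      rw [castA, ← Real.cos_neg]; ring_nf
    have c2 : Real.cos (((r:ℝ) - s) * x) = Real.cos (((s - r : ℕ):ℝ) * x) := by
      rw [castC, ← Real.cos_neg]; ring_nf
    have c3 : ((p:ℝ) + q) * x = ((q + p : ℕ):ℝ) * x := by push_cast; ring
    have c4 : ((r:ℝ) + s) * x = ((s + r : ℕ):ℝ) * x := by push_cast; ring
    rw [c1, c3] at e1
    rw [c2, c4] at e2
    have E1 : Real.sin ((p:ℝ) * x) * Real.sin ((q:ℝ) * x) =
        (Real.cos (((q - p : ℕ):ℝ) * x) - Real.cos (((q + p : ℕ):ℝ) * x)) / 2 := by linarith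
    have E2 : Real.sin ((r:ℝ) * x) * Real.sin ((s:ℝ) * x) =
        (Real.cos (((s - r : ℕ):ℝ) * x) - Real.cos (((s + r : ℕ):ℝ) * x)) / 2 := by linarith
    calc Real.sin ((p:ℝ) * x) * Real.sin ((q:ℝ) * x) * Real.sin ((r:ℝ) * x) * Real.sin ((s:ℝ) * x)
        = (Real.sin ((p:ℝ) * x) * Real.sin ((q:ℝ) * x)) * (Real.sin ((r:ℝ) * x) * Real.sin ((s:ℝ) * x)) := by ring
      _ = _ := by rw [E1, E2]; ring
  simp_rw [key]
  rw [intervalIntegral.integral_div]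
  have ii : ∀ a b : ℕ, IntervalIntegrable
      (fun x => Real.cos ((a:ℝ) * x) * Real.cos ((b:ℝ) * x)) MeasureTheory.volume 0 Real.pi := by
    intro a b
    exact (((Real.continuous_cos.comp (continuous_const.mul continuous_id)).mul
      (Real.continuous_cos.comp (continuous_const.mul continuous_id)))).intervalIntegrable _ _
  rw [intervalIntegral.integral_add (((ii _ _).sub (ii _ _)).sub (ii _ _)) (ii _ _),
    intervalIntegral.integral_sub ((ii _ _).sub (ii _ _)) (ii _ _),
    intervalIntegral.integral_sub (ii _ _) (ii _ _)]
  rw [int_cos_nat _ _ (by omega) (by omega), int_cos_nat _ _ (by omega) (by omega),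
    int_cos_nat _ _ (by omega) (by omega), int_cos_nat _ _ (by omega) (by omega)]
  have hπ := Real.pi_pos
  split_ifs <;> first | (exfalso; omega) | ring | norm_num
end

section
/- For every positive integer l and every real x, sin(lx) = sin(x) · Σ_{i=0}^{⌊(l−1)/2⌋} (−1)^i · C(l−i−1, i) · 2^{l−2i−1} · cos^{l−2i−1}(x), where C(·,·) denotes a binomial coefficient. -/
open Finset

noncomputable def Tsum (y : ℝ) (m : ℕ) : ℝ :=
  ∑ i ∈ range (m / 2 + 1), (-1:ℝ)^i * (Nat.choose (m - i) i : ℝ) * y ^ (m - 2*i)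

lemma Gaux (y : ℝ) (m : ℕ) :
    ∑ j ∈ range (m / 2 + 1), (-1:ℝ)^j * (Nat.choose (m - j) (j+1) : ℝ) * y ^ (m - 2*j)
      = ∑ j ∈ range ((m+1) / 2), (-1:ℝ)^j * (Nat.choose (m - j) (j+1) : ℝ) * y ^ (m - 2*j) := by
  rcases Nat.even_or_odd m with ⟨k, hk⟩ | ⟨k, hk⟩
  · subst hk
    have h1 : (k + k) / 2 + 1 = k + 1 := by omega
    have h2 : (k + k + 1) / 2 = k := by omega
    rw [h1, h2, Finset.sum_range_succ]
    have : Nat.choose (k + k - k) (k + 1) = 0 := by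
      apply Nat.choose_eq_zero_of_lt; omega
    rw [this]
    simp
  · subst hk
    have h1 : (2*k + 1) / 2 + 1 = (2*k + 1 + 1) / 2 := by omega
    rw [h1]

lemma Tsum_rec (y : ℝ) (m : ℕ) : Tsum y (m+2) = y * Tsum y (m+1) - Tsum y m := by
  have hdiv : (m+2) / 2 + 1 = (m / 2 + 1) + 1 := by omega
  have lhs : Tsum y (m+2)
      = (∑ j ∈ range (m / 2 + 1),
          (-1:ℝ)^(j+1) * (Nat.choose (m + 1 - j) (j+1) : ℝ) * y ^ (m - 2*j)) + y ^ (m+2) := by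
    rw [Tsum, hdiv, Finset.sum_range_succ']
    congr 1
    · apply Finset.sum_congr rfl
      intro j hj
      have h1 : m + 2 - (j+1) = m + 1 - j := by omega
      have h2 : m + 2 - 2*(j+1) = m - 2*j := by omega
      rw [h1, h2]
    · simp
  have rhs : y * Tsum y (m+1)
      = y ^ (m+2) - ∑ j ∈ range ((m+1) / 2),
          (-1:ℝ)^j * (Nat.choose (m - j) (j+1) : ℝ) * y ^ (m - 2*j) := by
    rw [Tsum, Finset.mul_sum, Finset.sum_range_succ']
    have e0 : y * ((-1:ℝ)^0 * (Nat.choose (m + 1 - 0) 0 : ℝ) * y ^ (m + 1 - 2*0)) = y ^ (m+2) := by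
      simp [← pow_succ']
    rw [e0]
    have e1 : ∑ j ∈ range ((m+1) / 2),
        y * ((-1:ℝ)^(j+1) * (Nat.choose (m + 1 - (j+1)) (j+1) : ℝ) * y ^ (m + 1 - 2*(j+1)))
        = - ∑ j ∈ range ((m+1) / 2),
            (-1:ℝ)^j * (Nat.choose (m - j) (j+1) : ℝ) * y ^ (m - 2*j) := by
      rw [← Finset.sum_neg_distrib]
      apply Finset.sum_congr rfl
      intro j hj
      rw [Finset.mem_range] at hj
      have h1 : m + 1 - (j+1) = m - j := by omega
      have h2 : m + 1 - 2*(j+1) = m - 2*j - 1 := by omega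
      rw [h1, h2]
      have h3 : y ^ (m - 2*j) = y ^ (m - 2*j - 1) * y := by
        rw [← pow_succ]; congr 1; omega
      rw [h3]; ring
    rw [e1]; ring
  rw [lhs, rhs]
  have pascal : ∀ j ∈ range (m / 2 + 1),
      (-1:ℝ)^(j+1) * (Nat.choose (m + 1 - j) (j+1) : ℝ) * y ^ (m - 2*j)
        = -((-1:ℝ)^j * (Nat.choose (m - j) j : ℝ) * y ^ (m - 2*j))
          + (-((-1:ℝ)^j * (Nat.choose (m - j) (j+1) : ℝ) * y ^ (m - 2*j))) := by
    intro j hj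
    rw [Finset.mem_range] at hj
    have h1 : m + 1 - j = (m - j) + 1 := by omega
    rw [h1, Nat.choose_succ_succ]
    push_cast
    ring
  rw [Finset.sum_congr rfl pascal, Finset.sum_add_distrib]
  have : ∑ j ∈ range (m / 2 + 1), -((-1:ℝ)^j * (Nat.choose (m - j) j : ℝ) * y ^ (m - 2*j))
      = - Tsum y m := by
    rw [Tsum, ← Finset.sum_neg_distrib]
  rw [this]
  have : ∑ j ∈ range (m / 2 + 1), -((-1:ℝ)^j * (Nat.choose (m - j) (j+1) : ℝ) * y ^ (m - 2*j))
      = - ∑ j ∈ range ((m+1) / 2), (-1:ℝ)^j * (Nat.choose (m - j) (j+1) : ℝ) * y ^ (m - 2*j) := by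
    rw [Finset.sum_neg_distrib, Gaux]
  rw [this]
  ring

lemma key (x : ℝ) : ∀ n : ℕ, Real.sin (((n:ℝ)+1) * x) = Real.sin x * Tsum (2 * Real.cos x) n := by
  intro n
  induction n using Nat.twoStepInduction with
  | zero => simp [Tsum]
  | one =>
      push_cast
      have : ((1:ℝ)+1) * x = 2 * x := by ring
      rw [this, Real.sin_two_mul, Tsum]
      norm_num
      ring
  | more n ih1 ih2 =>
      have trig : Real.sin (((n:ℝ)+2+1) * x)
          = 2 * Real.cos x * Real.sin (((n:ℝ)+1+1) * x) - Real.sin (((n:ℝ)+1) * x) := by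
        have h1 : ((n:ℝ)+2+1) * x = ((n:ℝ)+1+1) * x + x := by ring
        have h2 : ((n:ℝ)+1) * x = ((n:ℝ)+1+1) * x - x := by ring
        rw [h1, h2, Real.sin_add, Real.sin_sub]
        ring
      push_cast at trig ih1 ih2 ⊢
      rw [trig, ih1, ih2, Tsum_rec]
      ring

theorem sin_multiple_angle_formula (l : ℕ) (hl : 0 < l) (x : ℝ) :
    Real.sin ((l : ℝ) * x) =
      Real.sin x *
        ∑ i ∈ Finset.range ((l - 1) / 2 + 1),
          (-1 : ℝ) ^ i * (Nat.choose (l - i - 1) i : ℝ) * 2 ^ (l - 2 * i - 1) *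
            Real.cos x ^ (l - 2 * i - 1) := by
  obtain ⟨n, rfl⟩ : ∃ n, l = n + 1 := ⟨l - 1, by omega⟩
  have h := key x n
  have : ((n:ℝ) + 1) = ((n + 1 : ℕ) : ℝ) := by push_cast; ring
  rw [this] at h
  rw [h, Tsum]
  congr 1
  apply Finset.sum_congr
  · congr 1
  · intro i hi
    have h1 : n + 1 - i - 1 = n - i := by omega
    have h2 : n + 1 - 2*i - 1 = n - 2*i := by omega
    rw [h1, h2, mul_pow]
    ring
end

section
/- For every u ∈ H²(0, π) ∩ H¹₀(0, π), one has ‖u‖_{L^∞(0,π)} ≤ ‖u''‖_{L²(0,π)}. -/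
open intervalIntegral MeasureTheory Set Real

/-- Cauchy–Schwarz for interval integrals of continuous functions. -/
lemma cs_interval {a b : ℝ} (hab : a ≤ b) {f g : ℝ → ℝ} (hf : Continuous f) (hg : Continuous g) :
    (∫ t in a..b, f t * g t) ^ 2 ≤ (∫ t in a..b, f t ^ 2) * (∫ t in a..b, g t ^ 2) := by
  set A : ℝ := ∫ t in a..b, g t ^ 2 with hA
  set B : ℝ := ∫ t in a..b, f t * g t with hB
  set C : ℝ := ∫ t in a..b, f t ^ 2 with hC
  have key : ∀ lam : ℝ, 0 ≤ A * (lam * lam) + (2 * B) * lam + C := by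
    intro lam
    have h1 : ∀ t, 0 ≤ (lam * g t + f t) ^ 2 := fun t => sq_nonneg _
    have h2 : (∫ t in a..b, (lam * g t + f t) ^ 2)
        = A * (lam * lam) + (2 * B) * lam + C := by
      rw [hA, hB, hC]
      rw [show (fun t => (lam * g t + f t) ^ 2)
          = fun t => (lam * lam) * g t ^ 2 + (2 * lam) * (f t * g t) + f t ^ 2 by
        funext t; ring]
      rw [intervalIntegral.integral_add, intervalIntegral.integral_add,
        intervalIntegral.integral_const_mul, intervalIntegral.integral_const_mul]
      · ring
      · exact ((continuous_const.mul (hg.pow 2))).intervalIntegrable a b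
      · exact (continuous_const.mul (hf.mul hg)).intervalIntegrable a b
      · exact (((continuous_const.mul (hg.pow 2))).add
          (continuous_const.mul (hf.mul hg))).intervalIntegrable a b
      · exact (hf.pow 2).intervalIntegrable a b
    rw [← h2]
    exact intervalIntegral.integral_nonneg hab (fun t _ => h1 t)
  have hd := discrim_le_zero key
  rw [discrim] at hd
  nlinarith [hd]

theorem sup_norm_le_L2_norm_second_deriv (u : ℝ → ℝ)
    (hu : ContDiff ℝ 2 u) (h0 : u 0 = 0) (hπ : u Real.pi = 0) :
    ∀ x ∈ Set.Icc (0:ℝ) Real.pi,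
      |u x| ≤ Real.sqrt (∫ x in (0:ℝ)..Real.pi, (deriv (deriv u) x) ^ 2) := by
  intro x hx
  obtain ⟨hx0, hxπ⟩ := hx
  have hπ0 : (0:ℝ) < Real.pi := Real.pi_pos
  -- regularity facts
  have hcd1 : ContDiff ℝ 1 (deriv u) := by
    have := hu.iterate_deriv' 1 1
    simp only [Function.iterate_one] at this
    exact_mod_cast this
  have hd1 : Differentiable ℝ u := hu.differentiable two_ne_zero
  have hd2 : Differentiable ℝ (deriv u) := hcd1.differentiable one_ne_zero
  have hc2 : Continuous (deriv (deriv u)) := hcd1.continuous_deriv le_rfl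
  have hc1 : Continuous (deriv u) := hd2.continuous
  -- Green's function
  set g : ℝ → ℝ := fun t => min t x * (π - max t x) / π with hg
  have hgcont : Continuous g := by
    apply Continuous.div_const
    exact ((continuous_id.min continuous_const).mul
      (continuous_const.sub (continuous_id.max continuous_const)))
  -- integration by parts on [0, x]
  have hint1 : ∫ t in (0:ℝ)..x, deriv u t = u x := by
    rw [intervalIntegral.integral_deriv_eq_sub (fun t _ => hd1 t)
      (hc1.intervalIntegrable 0 x), h0, sub_zero]
  have I1 : ∫ t in (0:ℝ)..x, t * deriv (deriv u) t = x * deriv u x - u x := by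
    rw [intervalIntegral.integral_mul_deriv_eq_deriv_mul
      (u := fun t => t) (u' := fun _ => (1:ℝ)) (v := deriv u) (v' := deriv (deriv u))
      (fun t _ => hasDerivAt_id t)
      (fun t _ => (hd2 t).hasDerivAt)
      ((continuous_const).intervalIntegrable 0 x)
      (hc2.intervalIntegrable 0 x)]
    simp only [one_mul, hint1]
    ring
  -- integration by parts on [x, π]
  have hint2 : ∫ t in x..π, deriv u t = - u x := by
    rw [intervalIntegral.integral_deriv_eq_sub (fun t _ => hd1 t)
      (hc1.intervalIntegrable x π), hπ, zero_sub]
  have I2 : ∫ t in x..π, (π - t) * deriv (deriv u) t = -(π - x) * deriv u x - u x := by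
    rw [intervalIntegral.integral_mul_deriv_eq_deriv_mul
      (u := fun t => π - t) (u' := fun _ => (-1:ℝ)) (v := deriv u) (v' := deriv (deriv u))
      (fun t _ => (hasDerivAt_id t).const_sub π)
      (fun t _ => (hd2 t).hasDerivAt)
      ((continuous_const).intervalIntegrable x π)
      (hc2.intervalIntegrable x π)]
    have : ∫ t in x..π, (-1:ℝ) * deriv u t = u x := by
      rw [intervalIntegral.integral_const_mul, hint2]; ring
    rw [this]; ring
  -- the Green identity
  have hsplit : ∫ t in (0:ℝ)..π, g t * deriv (deriv u) t
      = (∫ t in (0:ℝ)..x, g t * deriv (deriv u) t) + ∫ t in x..π, g t * deriv (deriv u) t := by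
    rw [intervalIntegral.integral_add_adjacent_intervals]
    · exact (hgcont.mul hc2).intervalIntegrable 0 x
    · exact (hgcont.mul hc2).intervalIntegrable x π
  have e1 : ∫ t in (0:ℝ)..x, g t * deriv (deriv u) t
      = (π - x) / π * (x * deriv u x - u x) := by
    rw [← I1, ← intervalIntegral.integral_const_mul]
    apply intervalIntegral.integral_congr
    intro t ht
    rw [Set.uIcc_of_le hx0] at ht
    have h1 : min t x = t := min_eq_left ht.2
    have h2 : max t x = x := max_eq_right ht.2
    simp only [hg, h1, h2]
    ring
  have e2 : ∫ t in x..π, g t * deriv (deriv u) t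
      = x / π * (-(π - x) * deriv u x - u x) := by
    rw [← I2, ← intervalIntegral.integral_const_mul]
    apply intervalIntegral.integral_congr
    intro t ht
    rw [Set.uIcc_of_le hxπ] at ht
    have h1 : min t x = x := min_eq_right ht.1
    have h2 : max t x = t := max_eq_left ht.1
    simp only [hg, h1, h2]
    ring
  have key : ∫ t in (0:ℝ)..π, g t * deriv (deriv u) t = - u x := by
    rw [hsplit, e1, e2]
    field_simp
    ring
  -- compute ∫ g²
  have G1 : ∫ t in (0:ℝ)..x, g t ^ 2 = ((π - x) / π) ^ 2 * (x ^ 3 / 3) := by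
    have : ∫ t in (0:ℝ)..x, g t ^ 2 = ∫ t in (0:ℝ)..x, ((π - x)/π)^2 * t ^ 2 := by
      apply intervalIntegral.integral_congr
      intro t ht
      rw [Set.uIcc_of_le hx0] at ht
      have h1 : min t x = t := min_eq_left ht.2
      have h2 : max t x = x := max_eq_right ht.2
      simp only [hg, h1, h2]
      ring
    rw [this, intervalIntegral.integral_const_mul, integral_pow]
    norm_num
  have G2 : ∫ t in x..π, g t ^ 2 = (x / π) ^ 2 * ((π - x) ^ 3 / 3) := by
    have : ∫ t in x..π, g t ^ 2 = ∫ t in x..π, (x/π)^2 * (π - t) ^ 2 := by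
      apply intervalIntegral.integral_congr
      intro t ht
      rw [Set.uIcc_of_le hxπ] at ht
      have h1 : min t x = x := min_eq_right ht.1
      have h2 : max t x = t := max_eq_left ht.1
      simp only [hg, h1, h2]
      ring
    rw [this, intervalIntegral.integral_const_mul]
    have : ∫ t in x..π, (π - t) ^ 2 = (π - x) ^ 3 / 3 := by
      rw [intervalIntegral.integral_comp_sub_left (fun s => s ^ 2) π, integral_pow]
      norm_num
    rw [this]
  have Gsq : ∫ t in (0:ℝ)..π, g t ^ 2 = x ^ 2 * (π - x) ^ 2 / (3 * π) := by
    rw [← intervalIntegral.integral_add_adjacent_intervals (f := fun t => g t ^ 2)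
      ((hgcont.pow 2).intervalIntegrable 0 x) ((hgcont.pow 2).intervalIntegrable x π),
      G1, G2]
    field_simp
    ring
  have Gle : ∫ t in (0:ℝ)..π, g t ^ 2 ≤ 1 := by
    rw [Gsq]
    rw [div_le_one (by positivity)]
    have hb : x * (π - x) ≤ π ^ 2 / 4 := by nlinarith [sq_nonneg (2 * x - π)]
    have hπle : π ≤ 3.15 := Real.pi_lt_d2.le
    have hxn : 0 ≤ x * (π - x) := mul_nonneg hx0 (sub_nonneg.mpr hxπ)
    have hb2 : (x * (π - x)) * (x * (π - x)) ≤ (π ^ 2 / 4) * (π ^ 2 / 4) :=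
      mul_self_le_mul_self hxn hb
    have hπ3 : π ^ 3 ≤ 48 := by nlinarith [hπle, hπ0, sq_nonneg π]
    have h4 : π ^ 4 ≤ 48 * π := by nlinarith [mul_le_mul_of_nonneg_left hπ3 hπ0.le]
    calc x ^ 2 * (π - x) ^ 2 = (x * (π - x)) * (x * (π - x)) := by ring
      _ ≤ π ^ 2 / 4 * (π ^ 2 / 4) := hb2
      _ = π ^ 4 / 16 := by ring
      _ ≤ 48 * π / 16 := by linarith
      _ = 3 * π := by ring
  -- put it together
  have hA : (0:ℝ) ≤ ∫ t in (0:ℝ)..π, deriv (deriv u) t ^ 2 :=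
    intervalIntegral.integral_nonneg hπ0.le (fun t _ => sq_nonneg _)
  have hcs := cs_interval hπ0.le hgcont hc2
  rw [key] at hcs
  have hux : u x ^ 2 ≤ ∫ t in (0:ℝ)..π, deriv (deriv u) t ^ 2 := by
    have h1 : (- u x) ^ 2 = u x ^ 2 := by ring
    rw [h1] at hcs
    calc u x ^ 2 ≤ (∫ t in (0:ℝ)..π, g t ^ 2) * ∫ t in (0:ℝ)..π, deriv (deriv u) t ^ 2 := hcs
      _ ≤ 1 * ∫ t in (0:ℝ)..π, deriv (deriv u) t ^ 2 := by
          apply mul_le_mul_of_nonneg_right Gle hA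
      _ = _ := one_mul _
  exact Real.abs_le_sqrt hux
end
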